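/- arXiv:1505.07088 — 5 statements merged into one kernel-verified Lean document; each statement's English description precedes it below -/
import Mathlib

section
/- Let n ≥ 1, let Λ ⊆ ℂⁿ be a full lattice, and let Φ : ℂⁿ → ℂⁿ be a bijective ℂ-linear map with Φ(Λ) ⊆ Λ. Then the following are equivalent: (1) there exist a point x ∈ ℂⁿ with x ∉ span_ℚ(Λ) and integers m > n' ≥ 0 such that Φ^m(x) − Φ^{n'}(x) ∈ Λ (i.e., the induced isogeny of the torus ℂⁿ/Λ has a non-torsion preperiodic point); (2) there exist an integer k ≥ 1 and a nonzero vector v ∈ span_ℚ(Λ) with Φ^k(v) = v (i.e., some iterate of the isogeny pointwise fixes a positive-dimensional subtorus); (3) some eigenvalue of Φ (i.e., some root of the characteristic polynomial of Φ over ℂ) is a root of unity. -/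
open Polynomial

lemma aux_isRoot_charpoly_iff {n : ℕ} (f : (Fin n → ℂ) →ₗ[ℂ] (Fin n → ℂ)) (z : ℂ) :
    (LinearMap.charpoly f).IsRoot z ↔ ∃ v : Fin n → ℂ, v ≠ 0 ∧ f v = z • v := by
  classical
  set M : Matrix (Fin n) (Fin n) ℂ := LinearMap.toMatrix' f with hM
  have hch : LinearMap.charpoly f = M.charpoly := by
    rw [← LinearMap.charpoly_toMatrix f (Pi.basisFun ℂ (Fin n))]
    congr 1
  have hmap : (Matrix.charmatrix M).map (Polynomial.evalRingHom z)
      = Matrix.diagonal (fun _ => z) - M := by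
    ext i j
    by_cases h : i = j <;>
      simp [Matrix.charmatrix_apply, Matrix.diagonal_apply, h]
  have heval : ∀ w, M.mulVec w = f w := by
    intro w
    conv_rhs => rw [← Matrix.toLin'_toMatrix' f]
    rw [Matrix.toLin'_apply, hM]
  have hdet0 : (Polynomial.eval z (LinearMap.charpoly f))
      = (Matrix.diagonal (fun _ : Fin n => z) - M).det := by
    have h2 := (Polynomial.evalRingHom z).map_det (Matrix.charmatrix M)
    rw [RingHom.mapMatrix_apply, hmap] at h2
    rw [hch, Matrix.charpoly, ← h2]
    simp
  have hd : (Matrix.diagonal (fun _ : Fin n => z)).mulVec = fun v => z • v := by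
    funext v; ext i; simp [Matrix.mulVec_diagonal]
  constructor
  · intro hz
    have hdet : (Matrix.diagonal (fun _ : Fin n => z) - M).det = 0 := by
      rw [← hdet0]; exact hz
    obtain ⟨v, hv0, hv⟩ := Matrix.exists_mulVec_eq_zero_iff.mpr hdet
    refine ⟨v, hv0, ?_⟩
    rw [Matrix.sub_mulVec, sub_eq_zero, heval] at hv
    rw [← hv, hd]
  · rintro ⟨v, hv0, hv⟩
    have hdet : (Matrix.diagonal (fun _ : Fin n => z) - M).det = 0 := by
      rw [← Matrix.exists_mulVec_eq_zero_iff]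
      refine ⟨v, hv0, ?_⟩
      rw [Matrix.sub_mulVec, heval, hv, hd]
      simp
    rw [Polynomial.IsRoot, hdet0, hdet]

/-- Proposition 2.9 (MainProp) of the paper, in the lattice model: for an isogeny
of a complex torus `ℂⁿ/Λ` induced by a bijective `ℂ`-linear map `Φ` preserving the
full lattice `Λ`, the following are equivalent: (1) there is a non-torsion
preperiodic point; (2) some iterate of `Φ` fixes a nonzero rational lattice vector
(i.e. pointwise fixes a positive-dimensional subtorus); (3) some eigenvalue of `Φ`
is a root of unity. -/
theorem stmt_0 (n : ℕ) (hn : 1 ≤ n) (Λ : Submodule ℤ (Fin n → ℂ))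
    (hdisc : DiscreteTopology Λ)
    (hfull : Submodule.span ℝ (Λ : Set (Fin n → ℂ)) = ⊤)
    (Φ : (Fin n → ℂ) →ₗ[ℂ] (Fin n → ℂ)) (hbij : Function.Bijective Φ)
    (hΛ : ∀ x ∈ Λ, Φ x ∈ Λ) :
    List.TFAE
      [ ∃ x : Fin n → ℂ, x ∉ Submodule.span ℚ (Λ : Set (Fin n → ℂ)) ∧
          ∃ m n' : ℕ, n' < m ∧ (Φ ^ m) x - (Φ ^ n') x ∈ Λ,
        ∃ k : ℕ, 1 ≤ k ∧ ∃ v : Fin n → ℂ, v ≠ 0 ∧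
          v ∈ Submodule.span ℚ (Λ : Set (Fin n → ℂ)) ∧ (Φ ^ k) v = v,
        ∃ z : ℂ, (LinearMap.charpoly Φ).IsRoot z ∧ ∃ k : ℕ, 1 ≤ k ∧ z ^ k = 1 ] := by
  classical
  set V : Submodule ℚ (Fin n → ℂ) := Submodule.span ℚ (Λ : Set (Fin n → ℂ)) with hV
  -- Λ is finitely generated, so V is a finite-dimensional ℚ-space
  haveI : Module.Finite ℤ Λ := inferInstance
  have hfg : Λ.FG := (Submodule.fg_top Λ).mp Module.Finite.fg_top
  obtain ⟨S, hS⟩ := hfg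
  have hVS : V = Submodule.span ℚ (S : Set (Fin n → ℂ)) := by
    rw [hV, ← hS, Submodule.span_span_of_tower]
  haveI hVfin : FiniteDimensional ℚ V := by
    rw [hVS]; exact FiniteDimensional.span_of_finite ℚ S.finite_toSet
  haveI hVcount : Countable V := by
    have b := Module.finBasis ℚ V
    exact b.repr.toEquiv.injective.countable
  -- Φ maps V into V
  have hΦV : ∀ x ∈ V, Φ x ∈ V := by
    have : V ≤ V.comap (Φ.restrictScalars ℚ) := by
      rw [hV, Submodule.span_le]
      intro x hx
      exact Submodule.subset_span (hΛ x hx)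
    exact fun x hx => this hx
  have hΦpV : ∀ (k : ℕ), ∀ x ∈ V, (Φ ^ k) x ∈ V := by
    intro k
    induction k with
    | zero => intro x hx; simpa using hx
    | succ k ih =>
      intro x hx
      rw [pow_succ', Module.End.mul_apply]
      exact hΦV _ (ih x hx)
  -- injective on V implies solvable in V
  have key : ∀ (T : (Fin n → ℂ) →ₗ[ℂ] (Fin n → ℂ)), (∀ x ∈ V, T x ∈ V) →
      (∀ x ∈ V, T x = 0 → x = 0) → ∀ w ∈ V, ∃ y ∈ V, T y = w := by
    intro T hTV hTinj w hw
    let T' : V →ₗ[ℚ] V := (T.restrictScalars ℚ).restrict hTV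
    have hinj : Function.Injective T' := by
      intro a b hab
      have h1 : T (a : Fin n → ℂ) - T (b : Fin n → ℂ) = 0 := by
        have := congrArg (Subtype.val) hab
        exact sub_eq_zero.mpr this
      rw [← map_sub] at h1
      exact Subtype.ext (sub_eq_zero.mp (hTinj _ (Submodule.sub_mem V a.2 b.2) h1))
    have hsurj : Function.Surjective T' := LinearMap.injective_iff_surjective.mp hinj
    obtain ⟨y, hy⟩ := hsurj ⟨w, hw⟩
    exact ⟨(y : Fin n → ℂ), y.2, congrArg Subtype.val hy⟩
  -- injective on V implies injective on ℂⁿ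
  have key2 : ∀ (T : (Fin n → ℂ) →ₗ[ℂ] (Fin n → ℂ)), (∀ x ∈ V, T x ∈ V) →
      (∀ x ∈ V, T x = 0 → x = 0) → Function.Injective T := by
    intro T hTV hTinj
    have hsurj : Function.Surjective T := by
      rw [← LinearMap.range_eq_top]
      have hle : Submodule.span ℝ (Λ : Set (Fin n → ℂ))
          ≤ (LinearMap.range T).restrictScalars ℝ := by
        rw [Submodule.span_le]
        intro w hw
        obtain ⟨y, _, hy⟩ := key T hTV hTinj w (Submodule.subset_span hw)
        exact ⟨y, hy⟩
      rw [hfull] at hle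
      rw [eq_top_iff]
      intro w _
      exact hle (Submodule.mem_top)
    exact (LinearMap.injective_iff_surjective.mpr hsurj)
  tfae_have 1 → 3 := by
    rintro ⟨x, hxV, m, n', hmn', hmem⟩
    by_contra hno
    push_neg at hno
    set j := m - n' with hj
    have hj1 : 1 ≤ j := by omega
    -- Φ^j - 1 is injective
    have hsub_inj : Function.Injective (Φ ^ j - 1 : (Fin n → ℂ) →ₗ[ℂ] (Fin n → ℂ)) := by
      rw [← LinearMap.ker_eq_bot]
      by_contra hker
      obtain ⟨w, hw, hw0⟩ := Submodule.exists_mem_ne_zero_of_ne_bot hker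
      rw [LinearMap.mem_ker, LinearMap.sub_apply, Module.End.one_apply, sub_eq_zero] at hw
      -- 1 is an eigenvalue of Φ^j
      have h1 : (1 : ℂ) ∈ spectrum ℂ (Φ ^ j) := by
        rw [← Module.End.hasEigenvalue_iff_mem_spectrum]
        exact Module.End.hasEigenvalue_of_hasEigenvector
          ⟨Module.End.mem_eigenspace_iff.mpr (by rw [one_smul]; exact hw), hw0⟩
      rw [spectrum.map_pow_of_pos Φ hj1] at h1
      obtain ⟨z, hz, hzj⟩ := h1
      have hze : Module.End.HasEigenvalue Φ z :=
        Module.End.hasEigenvalue_iff_mem_spectrum.mpr hz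
      obtain ⟨u, hu⟩ := hze.exists_hasEigenvector
      have hroot : (LinearMap.charpoly Φ).IsRoot z :=
        (aux_isRoot_charpoly_iff Φ z).mpr ⟨u, hu.2, hu.apply_eq_smul⟩
      exact absurd hzj (by simpa using hno z hroot j hj1)
    -- T = Φ^m - Φ^n' is injective
    set T : (Fin n → ℂ) →ₗ[ℂ] (Fin n → ℂ) := Φ ^ m - Φ ^ n' with hT
    have hTfact : T = (Φ ^ n') * (Φ ^ j - 1) := by
      rw [hT, mul_sub, mul_one, ← pow_add, Nat.add_sub_cancel' (le_of_lt hmn')]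
    have hΦn'inj : Function.Injective (Φ ^ n' : (Fin n → ℂ) →ₗ[ℂ] (Fin n → ℂ)) := by
      rw [Module.End.coe_pow]
      exact Function.Injective.iterate hbij.injective n'
    have hTinj : Function.Injective T := by
      rw [hTfact]
      intro a b hab
      simp only [Module.End.mul_apply] at hab
      exact hsub_inj (hΦn'inj hab)
    -- T maps V to V
    have hTV : ∀ y ∈ V, T y ∈ V := by
      intro y hy
      rw [hT]
      simp only [LinearMap.sub_apply]
      exact Submodule.sub_mem V (hΦpV m y hy) (hΦpV n' y hy)
    have hTinjV : ∀ y ∈ V, T y = 0 → y = 0 := fun y _ h => hTinj (by simpa using h)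
    -- T x ∈ Λ ⊆ V, so x ∈ V: contradiction
    have hTx : T x ∈ V := Submodule.subset_span hmem
    obtain ⟨y, hyV, hyx⟩ := key T hTV hTinjV (T x) hTx
    exact hxV (hTinj hyx ▸ hyV)
  tfae_have 3 → 2 := by
    rintro ⟨z, hz, k, hk, hzk⟩
    obtain ⟨w, hw0, hww⟩ := (aux_isRoot_charpoly_iff Φ z).mp hz
    have hΦkw : (Φ ^ k) w = w := by
      have hpow : ∀ j : ℕ, (Φ ^ j) w = z ^ j • w := by
        intro j
        induction j with
        | zero => simp
        | succ j ih =>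
          rw [pow_succ', Module.End.mul_apply, ih, map_smul, hww, pow_succ', mul_smul]
          exact smul_comm _ _ _
      rw [hpow k, hzk, one_smul]
    set T : (Fin n → ℂ) →ₗ[ℂ] (Fin n → ℂ) := Φ ^ k - 1 with hT
    have hTw : T w = 0 := by
      rw [hT]; simp [hΦkw]
    have hTV : ∀ y ∈ V, T y ∈ V := by
      intro y hy
      rw [hT]
      simp only [LinearMap.sub_apply, Module.End.one_apply]
      exact Submodule.sub_mem V (hΦpV k y hy) hy
    have : ¬(∀ y ∈ V, T y = 0 → y = 0) := by
      intro h
      exact hw0 (key2 T hTV h (by simpa using hTw : T w = T 0))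
    push_neg at this
    obtain ⟨v, hvV, hv0, hvne⟩ := this
    refine ⟨k, hk, v, hvne, hvV, ?_⟩
    have h := hv0
    rw [hT] at h
    simp only [LinearMap.sub_apply, Module.End.one_apply] at h
    exact sub_eq_zero.mp h
  tfae_have 2 → 1 := by
    rintro ⟨k, hk, v, hv0, hvV, hvfix⟩
    have hinj : Function.Injective (fun c : ℂ => c • v) := by
      intro a b hab
      have hab' : a • v = b • v := hab
      have : (a - b) • v = 0 := by rw [sub_smul, hab', sub_self]
      rcases smul_eq_zero.mp this with h | h
      · exact sub_eq_zero.mp h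
      · exact absurd h hv0
    have hcount : Set.Countable {c : ℂ | c • v ∈ V} := by
      have : {c : ℂ | c • v ∈ V} = (fun c : ℂ => c • v) ⁻¹' (V : Set (Fin n → ℂ)) := rfl
      rw [this]
      exact (V : Set (Fin n → ℂ)).to_countable.preimage hinj
    have : ∃ c : ℂ, c • v ∉ V := by
      by_contra h
      push_neg at h
      have : {c : ℂ | c • v ∈ V} = Set.univ := Set.eq_univ_of_forall h
      rw [this] at hcount
      haveI : Uncountable ℂ := Complex.ofReal_injective.uncountable
      exact not_countable (α := ℂ) (Set.countable_univ_iff.mp hcount)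
    obtain ⟨c, hc⟩ := this
    refine ⟨c • v, hc, k, 0, hk, ?_⟩
    have : (Φ ^ k) (c • v) = c • v := by rw [map_smul, hvfix]
    rw [this]
    simp
  tfae_finish
end

section
/- Let n ≥ 1, let Λ ⊆ ℂⁿ be a full lattice, and let Φ : ℂⁿ → ℂⁿ be a bijective ℂ-linear map with Φ(Λ) ⊆ Λ. If no eigenvalue of Φ (no root of its characteristic polynomial over ℂ) is a root of unity, then for every x ∈ ℂⁿ the following are equivalent: (i) there exist integers m > n' ≥ 0 with Φ^m(x) − Φ^{n'}(x) ∈ Λ; (ii) x ∈ span_ℚ(Λ). That is, the set of preperiodic points of the induced isogeny of the complex torus ℂⁿ/Λ is exactly the set of torsion points. -/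
open Polynomial Module

/-- For a unity-free isogeny of a complex torus `ℂⁿ/Λ` (no eigenvalue of the
lifting `Φ` is a root of unity), the preperiodic points are exactly the torsion
points: `x` is preperiodic modulo `Λ` iff `x ∈ span_ℚ(Λ)`. -/
theorem stmt_1 (n : ℕ) (hn : 1 ≤ n) (Λ : Submodule ℤ (Fin n → ℂ))
    (hdisc : DiscreteTopology Λ)
    (hfull : Submodule.span ℝ (Λ : Set (Fin n → ℂ)) = ⊤)
    (Φ : (Fin n → ℂ) →ₗ[ℂ] (Fin n → ℂ)) (hbij : Function.Bijective Φ)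
    (hΛ : ∀ x ∈ Λ, Φ x ∈ Λ)
    (hunity : ∀ z : ℂ, (LinearMap.charpoly Φ).IsRoot z →
      ∀ k : ℕ, 1 ≤ k → z ^ k ≠ 1) :
    ∀ x : Fin n → ℂ,
      (∃ m n' : ℕ, n' < m ∧ (Φ ^ m) x - (Φ ^ n') x ∈ Λ) ↔
        x ∈ Submodule.span ℚ (Λ : Set (Fin n → ℂ)) := by
  intro x
  have hpow : ∀ (k : ℕ) (y : Fin n → ℂ), y ∈ Λ → (Φ ^ k) y ∈ Λ := by
    intro k
    induction k with
    | zero => intro y hy; simpa using hy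
    | succ k ih =>
      intro y hy
      rw [pow_succ, Module.End.mul_apply]
      exact ih _ (hΛ y hy)
  constructor
  · -- preperiodic → torsion
    rintro ⟨m, n', hlt, hmem⟩
    haveI : Nonempty (Fin n) := ⟨⟨0, hn⟩⟩
    set ψ : (Fin n → ℂ) →ₗ[ℂ] (Fin n → ℂ) := Φ ^ m - Φ ^ n' with hψ
    have hψa : ψ = Polynomial.aeval Φ ((X : ℂ[X]) ^ m - X ^ n') := by
      simp [hψ, map_sub]
    -- ψ is injective since no eigenvalue of Φ is a root of unity
    have hψu : IsUnit ψ := by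
      by_contra hns
      have h0 : (0 : ℂ) ∈ spectrum ℂ ψ := (spectrum.zero_mem_iff ℂ).mpr hns
      have hsp : (spectrum ℂ Φ).Nonempty := by
        obtain ⟨μ, hμ⟩ := Module.End.exists_eigenvalue Φ
        exact ⟨μ, Module.End.hasEigenvalue_iff_mem_spectrum.mp hμ⟩
      rw [hψa, spectrum.map_polynomial_aeval_of_nonempty Φ _ hsp] at h0
      obtain ⟨μ, hμ, hμ0⟩ := h0
      have hμroot : (LinearMap.charpoly Φ).IsRoot μ := by
        have hev : Module.End.HasEigenvalue Φ μ :=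
          Module.End.hasEigenvalue_iff_mem_spectrum.mpr hμ
        have h1 : (minpoly ℂ Φ).IsRoot μ := Module.End.isRoot_of_hasEigenvalue hev
        obtain ⟨q, hq⟩ := LinearMap.minpoly_dvd_charpoly Φ
        rw [Polynomial.IsRoot, hq, Polynomial.eval_mul, h1, zero_mul]
      have hμne : μ ≠ 0 := by
        intro h; subst h
        exact ((spectrum.zero_mem_iff ℂ).mp hμ) ((Module.End.isUnit_iff Φ).mpr hbij)
      have hpoweq : μ ^ m = μ ^ n' := by
        have h2 : μ ^ m - μ ^ n' = 0 := by simpa using hμ0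
        exact sub_eq_zero.mp h2
      have h1 : μ ^ (m - n') = 1 := by
        have hne : μ ^ n' ≠ 0 := pow_ne_zero _ hμne
        have h3 : μ ^ n' * μ ^ (m - n') = μ ^ n' * 1 := by
          rw [mul_one, ← pow_add, show n' + (m - n') = m from by omega, hpoweq]
        exact mul_left_cancel₀ hne h3
      exact hunity μ hμroot (m - n') (by omega) h1
    have hψinj : Function.Injective ψ := ((Module.End.isUnit_iff ψ).mp hψu).injective
    -- V = span_ℚ Λ is a finite-dimensional ℚ-vector space
    set V := Submodule.span ℚ (Λ : Set (Fin n → ℂ)) with hV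
    obtain ⟨S, hS⟩ : Λ.FG := Module.Finite.iff_fg.mp inferInstance
    haveI : FiniteDimensional ℚ V := by
      have hVS : V = Submodule.span ℚ (S : Set (Fin n → ℂ)) := by
        rw [hV, ← hS, Submodule.span_span_of_tower]
      rw [hVS]
      exact FiniteDimensional.span_of_finite ℚ S.finite_toSet
    -- ψ maps V into V
    have hle : V ≤ V.comap (ψ.restrictScalars ℚ) := by
      rw [hV, Submodule.span_le]
      intro z hz
      simp only [SetLike.mem_coe, Submodule.mem_comap, LinearMap.restrictScalars_apply]
      have hz2 : ψ z ∈ Λ := by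
        have : ψ z = (Φ ^ m) z - (Φ ^ n') z := by simp [hψ]
        rw [this]; exact Λ.sub_mem (hpow m z hz) (hpow n' z hz)
      exact Submodule.subset_span hz2
    let ψ' : V →ₗ[ℚ] V := (ψ.restrictScalars ℚ).restrict (fun z hz => hle hz)
    have hinj' : Function.Injective ψ' := by
      intro a b hab
      have h2 : ψ (a : Fin n → ℂ) = ψ b := congrArg Subtype.val hab
      exact Subtype.ext (hψinj h2)
    have hsurj' : Function.Surjective ψ' := LinearMap.surjective_of_injective hinj'
    have hxV : ψ x ∈ V := Submodule.subset_span (by simpa [hψ] using hmem)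
    obtain ⟨⟨y, hy⟩, hyeq⟩ := hsurj' ⟨ψ x, hxV⟩
    have h2 : ψ y = ψ x := congrArg Subtype.val hyeq
    have hxy : y = x := hψinj h2
    exact hxy ▸ hy
  · -- torsion → preperiodic
    intro hx
    -- clear denominators
    have hc : ∃ c : ℤ, c ≠ 0 ∧ c • x ∈ Λ := by
      refine Submodule.span_induction (fun z hz => ⟨1, one_ne_zero, by simpa using hz⟩)
        ⟨1, one_ne_zero, by simp⟩ ?_ ?_ hx
      · rintro y z hy hz ⟨a, ha0, ha⟩ ⟨b, hb0, hb⟩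
        refine ⟨a * b, mul_ne_zero ha0 hb0, ?_⟩
        rw [smul_add]
        have h1 : (a * b) • y = b • (a • y) := by rw [mul_comm, mul_smul]
        have h2 : (a * b) • z = a • (b • z) := mul_smul a b z
        rw [h1, h2]
        exact Λ.add_mem (Λ.smul_mem b ha) (Λ.smul_mem a hb)
      · rintro q z hz ⟨a, ha0, ha⟩
        refine ⟨(q.den : ℤ) * a,
          mul_ne_zero (Int.natCast_ne_zero.mpr q.den_ne_zero) ha0, ?_⟩
        have key : ((q.den : ℤ) * a) • (q • z) = q.num • (a • z) := by
          rw [← smul_assoc]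
          have h4 : ((q.den : ℤ) * a) • q = ((q.num * a : ℤ) : ℚ) := by
            rw [zsmul_eq_mul]
            push_cast
            rw [mul_right_comm, Rat.den_mul_eq_num]
          rw [h4, Int.cast_smul_eq_zsmul, mul_smul]
        rw [key]
        exact Λ.smul_mem q.num ha
    obtain ⟨c, hc0, hcx⟩ := hc
    let b := Module.Free.chooseBasis ℤ Λ
    set ι := Module.Free.ChooseBasisIndex ℤ Λ with hι
    have hmemk : ∀ k : ℕ, c • (Φ ^ k) x ∈ Λ := by
      intro k
      rw [← map_zsmul]
      exact hpow k _ hcx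
    let f : ℕ → Λ := fun k => ⟨c • (Φ ^ k) x, hmemk k⟩
    set N := c.natAbs with hN
    have hN0 : N ≠ 0 := Int.natAbs_ne_zero.mpr hc0
    haveI : NeZero N := ⟨hN0⟩
    let g : ℕ → (ι → ZMod N) := fun k i => ((b.repr (f k)) i : ZMod N)
    obtain ⟨k₁, k₂, hne, hg⟩ := Finite.exists_ne_map_eq_of_infinite g
    suffices h : ∀ k₁ k₂ : ℕ, k₁ < k₂ → g k₁ = g k₂ →
        ∃ m n' : ℕ, n' < m ∧ (Φ ^ m) x - (Φ ^ n') x ∈ Λ by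
      rcases hne.lt_or_gt with h12 | h12
      · exact h k₁ k₂ h12 hg
      · exact h k₂ k₁ h12 hg.symm
    intro k₁ k₂ hlt hg
    have hdvd : ∀ i, c ∣ (b.repr (f k₂ - f k₁)) i := by
      intro i
      rw [map_sub, Finsupp.sub_apply]
      have h1 : ((b.repr (f k₁)) i : ZMod N) = ((b.repr (f k₂)) i : ZMod N) :=
        congrFun hg i
      have h2 : ((N : ℤ)) ∣ ((b.repr (f k₂)) i - (b.repr (f k₁)) i) := by
        rw [← ZMod.intCast_zmod_eq_zero_iff_dvd]
        push_cast
        rw [sub_eq_zero]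
        exact h1.symm
      rw [hN] at h2
      exact Int.natAbs_dvd.mp h2
    let u : Λ := ∑ i, (((b.repr (f k₂ - f k₁)) i) / c) • b i
    have hcu : c • u = f k₂ - f k₁ := by
      conv_rhs => rw [← b.sum_repr (f k₂ - f k₁)]
      rw [Finset.smul_sum]
      refine Finset.sum_congr rfl fun i _ => ?_
      rw [smul_smul, Int.mul_ediv_cancel' (hdvd i)]
    have hcoe : c • (u : Fin n → ℂ) = c • ((Φ ^ k₂) x - (Φ ^ k₁) x) := by
      have h3 := congrArg (Subtype.val) hcu
      simpa [f, smul_sub] using h3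
    have hu : (u : Fin n → ℂ) = (Φ ^ k₂) x - (Φ ^ k₁) x := by
      have hC : (c : ℂ) ≠ 0 := Int.cast_ne_zero.mpr hc0
      rw [← Int.cast_smul_eq_zsmul ℂ, ← Int.cast_smul_eq_zsmul ℂ] at hcoe
      exact smul_right_injective _ hC hcoe
    exact ⟨k₂, k₁, hlt, hu ▸ u.2⟩
end

section
/- Let n ≥ 1, let Λ ⊆ ℂⁿ be a full lattice, and let Φ : ℂⁿ → ℂⁿ be a bijective ℂ-linear map with Φ(Λ) ⊆ Λ. If some eigenvalue of Φ (some root of its characteristic polynomial over ℂ) is a root of unity, then there exist an integer k ≥ 1 and a nonzero vector v ∈ span_ℚ(Λ) such that Φ^k(v) = v. -/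
open Module

/-- Evaluation of the characteristic polynomial of a matrix. -/
lemma charpoly_eval_aux {ι : Type*} [Fintype ι] [DecidableEq ι] {R : Type*} [CommRing R]
    (A : Matrix ι ι R) (z : R) :
    (Matrix.charpoly A).eval z = (z • (1 : Matrix ι ι R) - A).det := by
  have h := RingHom.map_det (Polynomial.evalRingHom z) (Matrix.charmatrix A)
  rw [Matrix.charpoly, ← Polynomial.coe_evalRingHom, RingHom.map_det]
  congr 1
  ext i j
  by_cases h : i = j <;>
    simp [Matrix.charmatrix_apply, h, Matrix.one_apply, Matrix.smul_apply, Matrix.sub_apply,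
      Matrix.diagonal_apply]

set_option maxHeartbeats 1000000
set_option synthInstance.maxHeartbeats 400000

/-- Step (3 ⇒ 2) in Proposition 2.9 (MainProp) of the paper: if some eigenvalue
of a bijective `ℂ`-linear map `Φ` preserving the full lattice `Λ ⊆ ℂⁿ` is a root
of unity, then some iterate of `Φ` fixes a nonzero vector of `span_ℚ(Λ)`. -/
theorem stmt_6 (n : ℕ) (hn : 1 ≤ n) (Λ : Submodule ℤ (Fin n → ℂ))
    (hdisc : DiscreteTopology Λ)
    (hfull : Submodule.span ℝ (Λ : Set (Fin n → ℂ)) = ⊤)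
    (Φ : (Fin n → ℂ) →ₗ[ℂ] (Fin n → ℂ)) (hbij : Function.Bijective Φ)
    (hΛ : ∀ x ∈ Λ, Φ x ∈ Λ)
    (hroot : ∃ z : ℂ, (LinearMap.charpoly Φ).IsRoot z ∧ ∃ k : ℕ, 1 ≤ k ∧ z ^ k = 1) :
    ∃ k : ℕ, 1 ≤ k ∧ ∃ v : Fin n → ℂ, v ≠ 0 ∧
      v ∈ Submodule.span ℚ (Λ : Set (Fin n → ℂ)) ∧ (Φ ^ k) v = v := by
  classical
  obtain ⟨z, hz, k, hk, hzk⟩ := hroot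
  refine ⟨k, hk, ?_⟩
  -- ### Step 1: find a complex eigenvector `w` of `Φ` with eigenvalue `z`.
  set e : Basis (Fin n) ℂ (Fin n → ℂ) := Pi.basisFun ℂ (Fin n) with he
  set A : Matrix (Fin n) (Fin n) ℂ := LinearMap.toMatrix e e Φ with hA
  have hdetA : (z • (1 : Matrix (Fin n) (Fin n) ℂ) - A).det = 0 := by
    rw [← charpoly_eval_aux A z, LinearMap.charpoly_toMatrix Φ e]
    exact hz
  obtain ⟨w, hw0, hw⟩ := Matrix.exists_mulVec_eq_zero_iff.2 hdetA
  have hAw : A.mulVec w = z • w := by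
    rw [Matrix.sub_mulVec, Matrix.smul_mulVec, Matrix.one_mulVec, sub_eq_zero] at hw
    exact hw.symm
  have hΦw : Φ w = z • w := by
    have h1 := LinearMap.toMatrix_mulVec_repr e e Φ w
    have h2 : ⇑(e.repr w) = w := by funext i; simp [he]
    have h3 : ⇑(e.repr (Φ w)) = Φ w := by funext i; simp [he]
    rw [h2, h3] at h1
    rw [← h1, ← hA, hAw]
  have hΦkw : (Φ ^ k) w = w := by
    have hpow : ∀ m : ℕ, (Φ ^ m) w = z ^ m • w := by
      intro m
      induction m with
      | zero => simp
      | succ m ih =>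
        rw [pow_succ, Module.End.mul_apply, hΦw, map_smul, ih, smul_smul, pow_succ, mul_comm]
    rw [hpow k, hzk, one_smul]
  -- ### Step 2: lattice basis and the integer matrix of `Φ`.
  haveI : IsZLattice ℝ Λ := ⟨hfull⟩
  haveI := ZLattice.module_finite ℝ Λ
  haveI := ZLattice.module_free ℝ Λ
  set ι := Module.Free.ChooseBasisIndex ℤ Λ with hι
  set b : Basis ι ℤ Λ := Module.Free.chooseBasis ℤ Λ with hb
  set b' : Basis ι ℝ (Fin n → ℂ) := b.ofZLatticeBasis ℝ Λ with hb'
  set Φr : (Fin n → ℂ) →ₗ[ℝ] (Fin n → ℂ) := Φ.restrictScalars ℝ with hΦr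
  have hmem : ∀ i, b' i ∈ Λ := fun i => by
    rw [hb', Basis.ofZLatticeBasis_apply]; exact (b i).2
  set N : Matrix ι ι ℤ := fun i j => b.repr ⟨Φ (b' j), hΛ _ (hmem j)⟩ i with hNdef
  have hreprZ : ∀ (x : Λ) (i : ι), b'.repr (x : Fin n → ℂ) i = ((b.repr x i : ℤ) : ℝ) :=
    fun x i => Basis.ofZLatticeBasis_repr_apply ℝ Λ b x i
  have hN : LinearMap.toMatrix b' b' Φr = N.map (Int.cast : ℤ → ℝ) := by
    ext i j
    rw [LinearMap.toMatrix_apply, Matrix.map_apply]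
    exact hreprZ ⟨Φ (b' j), hΛ _ (hmem j)⟩ i
  have hNk : LinearMap.toMatrix b' b' (Φr ^ k) = (N ^ k).map (Int.cast : ℤ → ℝ) := by
    rw [← LinearMap.toMatrix_pow, hN]
    have : (N.map (Int.cast : ℤ → ℝ)) = (Int.castRingHom ℝ).mapMatrix N := rfl
    rw [this, ← map_pow]
    rfl
  have hpowr : ∀ v : Fin n → ℂ, (Φ ^ k) v = (Φr ^ k) v := by
    have : ∀ m : ℕ, Φr ^ m = (Φ ^ m).restrictScalars ℝ := by
      intro m
      induction m with
      | zero => rfl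
      | succ m ih => rw [pow_succ, pow_succ, ih]; rfl
    intro v; rw [this k]; rfl
  -- ### Step 3: `det (N^k - 1) = 0` over `ℤ`.
  have hw1 : (Φr ^ k - 1) w = 0 := by
    rw [LinearMap.sub_apply, ← hpowr w, hΦkw, Module.End.one_apply, sub_self]
  have hu : ⇑(b'.repr w) ≠ 0 := by
    intro h
    exact hw0 (by simpa [Finsupp.coe_eq_zero, LinearEquiv.map_eq_zero_iff] using h)
  have hMeq : LinearMap.toMatrix b' b' (Φr ^ k - 1) = (N ^ k - 1).map (Int.cast : ℤ → ℝ) := by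
    rw [map_sub, hNk, LinearMap.toMatrix_one]
    have : ((N ^ k - 1).map (Int.cast : ℤ → ℝ)) = (Int.castRingHom ℝ).mapMatrix (N ^ k - 1) := rfl
    rw [this, map_sub, _root_.map_one]
    rfl
  have hdetR : ((N ^ k - 1).map (Int.cast : ℤ → ℝ)).det = 0 := by
    rw [← hMeq]
    refine Matrix.exists_mulVec_eq_zero_iff.1 ⟨⇑(b'.repr w), hu, ?_⟩
    rw [LinearMap.toMatrix_mulVec_repr, hw1]
    simp
  have hdetZ : (N ^ k - 1).det = 0 := by
    have : (((N ^ k - 1).det : ℤ) : ℝ) = 0 := by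
      rw [show ((N ^ k - 1).map (Int.cast : ℤ → ℝ)) = (Int.castRingHom ℝ).mapMatrix (N ^ k - 1)
        from rfl] at hdetR
      rwa [← RingHom.map_det] at hdetR
    exact_mod_cast this
  -- ### Step 4: rational kernel vector.
  have hdetQ : ((N ^ k - 1).map (Int.cast : ℤ → ℚ)).det = 0 := by
    rw [show ((N ^ k - 1).map (Int.cast : ℤ → ℚ)) = (Int.castRingHom ℚ).mapMatrix (N ^ k - 1)
      from rfl, ← RingHom.map_det, hdetZ]
    simp
  obtain ⟨q, hq0, hq⟩ := Matrix.exists_mulVec_eq_zero_iff.2 hdetQ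
  have hqfix : ((N ^ k).map (Int.cast : ℤ → ℚ)).mulVec q = q := by
    have h1 : ((N ^ k - 1).map (Int.cast : ℤ → ℚ))
        = (N ^ k).map (Int.cast : ℤ → ℚ) - 1 := by
      rw [show ∀ M : Matrix ι ι ℤ, (M.map (Int.cast : ℤ → ℚ)) = (Int.castRingHom ℚ).mapMatrix M
        from fun _ => rfl, map_sub, _root_.map_one]
      rfl
    rw [h1, Matrix.sub_mulVec, Matrix.one_mulVec, sub_eq_zero] at hq
    exact hq
  -- ### Step 5: build the fixed vector `v`.
  set v : Fin n → ℂ := ∑ i, (q i : ℝ) • b' i with hv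
  have hrepr : ⇑(b'.repr v) = fun j => ((q j : ℝ)) := by
    rw [hv]
    exact b'.repr_sum_self _
  have hv0 : v ≠ 0 := by
    intro h
    apply hq0
    funext j
    have : (q j : ℝ) = 0 := by
      rw [← congrFun hrepr j, h, map_zero]; rfl
    exact_mod_cast this
  have hvmem : v ∈ Submodule.span ℚ (Λ : Set (Fin n → ℂ)) := by
    rw [hv]
    refine Submodule.sum_mem _ fun i _ => ?_
    rw [Rat.cast_smul_eq_qsmul]
    exact Submodule.smul_mem _ _ (Submodule.subset_span (hmem i))
  refine ⟨v, hv0, hvmem, ?_⟩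
  rw [hpowr v]
  apply b'.repr.injective
  have h1 := LinearMap.toMatrix_mulVec_repr b' b' (Φr ^ k) v
  rw [hNk] at h1
  ext j
  have h2 : ⇑(b'.repr ((Φr ^ k) v)) j = (((N ^ k).map (Int.cast : ℤ → ℝ)).mulVec ⇑(b'.repr v)) j :=
    (congrFun h1 j).symm
  rw [h2, hrepr]
  have h3 : (((N ^ k).map (Int.cast : ℤ → ℝ)).mulVec fun i => ((q i : ℝ))) j
      = (((((N ^ k).map (Int.cast : ℤ → ℚ)).mulVec q) j : ℚ) : ℝ) := by
    simp only [Matrix.mulVec, dotProduct, Matrix.map_apply]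
    push_cast
    rfl
  rw [h3, hqfix]
end

section
/- Let p be a monic polynomial of degree 4 with integer coefficients, and let γ₁, γ₂ ∈ ℂ be such that the multiset of complex roots of p (with multiplicity) is {γ₁, γ₂, conj(γ₁), conj(γ₂)}. If |γ₁| = 1, then γ₁ is a root of unity: there exists an integer k ≥ 1 with γ₁^k = 1. -/
/-- The arithmetic core of Proposition 4.4 (abeliansurfaces) of the paper: if a
monic integer polynomial of degree 4 has complex roots (with multiplicity)
`{γ₁, γ₂, conj γ₁, conj γ₂}` and `|γ₁| = 1`, then `γ₁` is a root of unity. -/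
theorem stmt_9 (p : Polynomial ℤ) (hmonic : p.Monic) (hdeg : p.natDegree = 4)
    (γ₁ γ₂ : ℂ)
    (hroots : (p.map (Int.castRingHom ℂ)).roots =
      {γ₁, γ₂, (starRingEnd ℂ) γ₁, (starRingEnd ℂ) γ₂})
    (habs : ‖γ₁‖ = 1) :
    ∃ k : ℕ, 1 ≤ k ∧ γ₁ ^ k = 1 := by
  classical
  have pmapne : p.map (Int.castRingHom ℂ) ≠ 0 := (hmonic.map _).ne_zero
  have hroot₁ : γ₁ ∈ (p.map (Int.castRingHom ℂ)).roots := by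
    rw [hroots]; simp
  have hpγ : (p.map (Int.castRingHom ℂ)).eval γ₁ = 0 :=
    (Polynomial.mem_roots pmapne).1 hroot₁
  have hint : IsIntegral ℤ γ₁ := by
    refine ⟨p, hmonic, ?_⟩
    rwa [← Polynomial.eval_map, algebraMap_int_eq]
  have hintQ : IsIntegral ℚ γ₁ := hint.tower_top
  set q : Polynomial ℚ := minpoly ℚ γ₁ with hq
  have hqm : q.Monic := minpoly.monic hintQ
  have hqirr : Irreducible q := minpoly.irreducible hintQ
  have hqne : q ≠ 0 := hqm.ne_zero
  have hγ1ne : γ₁ ≠ 0 := by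
    intro h; rw [h] at habs; simp at habs
  -- map factorization: p over ℂ = (p over ℚ) mapped to ℂ
  have hmapmap : (p.map (Int.castRingHom ℚ)).map (algebraMap ℚ ℂ)
      = p.map (Int.castRingHom ℂ) := by
    rw [Polynomial.map_map]
    congr 1
  -- q divides p over ℚ
  have hqdvd : q ∣ p.map (Int.castRingHom ℚ) := by
    apply minpoly.dvd
    rw [Polynomial.aeval_def, Polynomial.eval₂_eq_eval_map, hmapmap]
    exact hpγ
  -- every root of q is among the four roots of p
  have rootsub : ∀ z : ℂ, Polynomial.aeval z q = 0 →
      z = γ₁ ∨ z = γ₂ ∨ z = (starRingEnd ℂ) γ₁ ∨ z = (starRingEnd ℂ) γ₂ := by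
    intro z hz
    obtain ⟨s, hs⟩ := hqdvd
    have hpz : (p.map (Int.castRingHom ℂ)).eval z = 0 := by
      rw [← hmapmap, hs, Polynomial.map_mul, Polynomial.eval_mul]
      have hzq : Polynomial.eval z (q.map (algebraMap ℚ ℂ)) = 0 := by
        rwa [← Polynomial.eval₂_eq_eval_map, ← Polynomial.aeval_def]
      rw [hzq, zero_mul]
    have : z ∈ (p.map (Int.castRingHom ℂ)).roots := by
      rw [Polynomial.mem_roots pmapne]; exact hpz
    rw [hroots] at this
    simpa using this
  have absmem : ∀ z : ℂ, Polynomial.aeval z q = 0 →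
      ‖z‖ = 1 ∨ ‖z‖ = ‖γ₂‖ := by
    intro z hz
    rcases rootsub z hz with h | h | h | h <;> subst h
    · exact Or.inl habs
    · exact Or.inr rfl
    · left; rw [Complex.norm_conj]; exact habs
    · right; rw [Complex.norm_conj]
  -- conj γ₁ = γ₁⁻¹
  have hnsq : γ₁ * (starRingEnd ℂ) γ₁ = 1 := by
    rw [Complex.mul_conj]
    norm_cast
    rw [Complex.normSq_eq_norm_sq, habs]; norm_num
  have hconj : (starRingEnd ℂ) γ₁ = γ₁⁻¹ :=
    eq_inv_of_mul_eq_one_right hnsq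
  -- conj γ₁ is a root of q
  have hq0 : Polynomial.aeval ((starRingEnd ℂ) γ₁) q = 0 := by
    have h1 := Polynomial.aeval_algHom_apply ((starRingEnd ℂ).toRatAlgHom) γ₁ q
    rw [hq, minpoly.aeval, map_zero] at h1
    exact h1
  -- nonzero constant coefficient, so no root of q is zero
  have qcoeff0 : q.coeff 0 ≠ 0 := minpoly.coeff_zero_ne_zero hintQ hγ1ne
  have rootne : ∀ z : ℂ, Polynomial.aeval z q = 0 → z ≠ 0 := by
    intro z hz h0
    subst h0
    rw [Polynomial.aeval_def, Polynomial.eval₂_at_zero] at hz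
    exact qcoeff0 (by simpa using hz)
  -- q divides its reverse
  have hrev_root : Polynomial.aeval ((starRingEnd ℂ) γ₁) q.reverse = 0 := by
    haveI := invertibleOfNonzero hγ1ne
    rw [hconj, Polynomial.aeval_def, ← invOf_eq_inv]
    rw [Polynomial.eval₂_reverse_eq_zero_iff]
    have := minpoly.aeval ℚ γ₁
    rwa [Polynomial.aeval_def] at this
  have hqmin' : q = minpoly ℚ ((starRingEnd ℂ) γ₁) :=
    minpoly.eq_of_irreducible_of_monic hqirr hq0 hqm
  have hqdvdrev : q ∣ q.reverse := by
    have h := minpoly.dvd ℚ ((starRingEnd ℂ) γ₁) hrev_root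
    rwa [← hqmin'] at h
  obtain ⟨s, hs⟩ := hqdvdrev
  have hrevne : q.reverse ≠ 0 := by
    rw [Ne, Polynomial.reverse_eq_zero]; exact hqne
  have hsne : s ≠ 0 := by rintro rfl; rw [mul_zero] at hs; exact hrevne hs
  have hsdeg : s.natDegree = 0 := by
    have h1 : q.reverse.natDegree ≤ q.natDegree := q.reverse_natDegree_le
    have h2 : q.reverse.natDegree = q.natDegree + s.natDegree := by
      rw [hs, Polynomial.natDegree_mul hqne hsne]
    omega
  have hsC : s = Polynomial.C (s.coeff 0) := Polynomial.eq_C_of_natDegree_eq_zero hsdeg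
  have hcne : s.coeff 0 ≠ 0 := by
    intro h; apply hsne; rw [hsC, h, map_zero]
  -- root set of q is closed under inversion
  have invclosed : ∀ z : ℂ, Polynomial.aeval z q = 0 → Polynomial.aeval z⁻¹ q = 0 := by
    intro z hz
    have hzne : z ≠ 0 := rootne z hz
    haveI := invertibleOfNonzero hzne
    have hrz : Polynomial.aeval (⅟z) q.reverse = 0 := by
      rw [Polynomial.aeval_def, Polynomial.eval₂_reverse_eq_zero_iff]
      rwa [Polynomial.aeval_def] at hz
    rw [invOf_eq_inv] at hrz
    rw [hs, hsC, map_mul, Polynomial.aeval_C] at hrz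
    rcases mul_eq_zero.1 hrz with h | h
    · exact h
    · exact absurd (by simpa using h) hcne
  -- all roots of q have absolute value 1
  have allabs1 : ∀ z : ℂ, Polynomial.aeval z q = 0 → ‖z‖ = 1 := by
    intro z hz
    rcases absmem z hz with h | h
    · exact h
    have hzne : z ≠ 0 := rootne z hz
    have hz' := invclosed z hz
    have habs_inv : ‖z⁻¹‖ = ‖z‖⁻¹ := norm_inv _
    have hpos : 0 < ‖z‖ := by
      simpa using hzne
    rcases absmem _ hz' with h' | h'
    · rw [habs_inv] at h'
      have : ‖z‖ = 1 := by
        field_simp at h'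
        linarith
      exact this
    · rw [habs_inv, ← h] at h'
      have : ‖z‖ * ‖z‖ = 1 := by
        field_simp at h'
        linarith [h'.symm]
      nlinarith
  -- pass to the number field ℚ(γ₁)
  let K := IntermediateField.adjoin ℚ ({γ₁} : Set ℂ)
  haveI : FiniteDimensional ℚ K := IntermediateField.adjoin.finiteDimensional hintQ
  haveI : NumberField K := ⟨⟩
  let x : K := ⟨γ₁, IntermediateField.mem_adjoin_simple_self ℚ γ₁⟩
  have hxmap : algebraMap K ℂ x = γ₁ := rfl
  have hxint : IsIntegral ℤ x := by
    rw [← isIntegral_algebraMap_iff (algebraMap K ℂ).injective, hxmap]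
    exact hint
  have hxmin : minpoly ℚ x = q := by
    rw [← minpoly.algebraMap_eq (algebraMap K ℂ).injective x, hxmap]
  have hnorm : ∀ φ : K →+* ℂ, ‖φ x‖ = 1 := by
    intro φ
    have hroot : Polynomial.aeval (φ x) (minpoly ℚ x) = 0 := by
      have h1 := Polynomial.aeval_algHom_apply (φ.toRatAlgHom) x (minpoly ℚ x)
      rw [minpoly.aeval, map_zero] at h1
      exact h1
    rw [hxmin] at hroot
    exact allabs1 _ hroot
  obtain ⟨n, hn, hxn⟩ := NumberField.Embeddings.pow_eq_one_of_norm_eq_one K ℂ hxint hnorm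
  refine ⟨n, hn, ?_⟩
  have := congrArg (algebraMap K ℂ) hxn
  rw [map_pow, hxmap, map_one] at this
  exact this
end

section
/- No complex root of the polynomial X⁴ − 3X³ − 4X² − 3X + 1 is a root of unity; that is, for every z ∈ ℂ with z⁴ − 3z³ − 4z² − 3z + 1 = 0 and every integer k ≥ 1 one has z^k ≠ 1. -/
/-- The claim in §3.2 of the paper that the automorphism
`(e₁,e₂,e₃,e₄) ↦ (e₂,e₃,e₄,−e₁+3e₂+4e₃+3e₄)` of `E × E × E × E` is unity-free:
no complex root of `X⁴ − 3X³ − 4X² − 3X + 1` is a root of unity. -/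
theorem stmt_10 :
    ∀ z : ℂ, z ^ 4 - 3 * z ^ 3 - 4 * z ^ 2 - 3 * z + 1 = 0 →
      ∀ k : ℕ, 1 ≤ k → z ^ k ≠ 1 := by
  intro z hz k hk hzk
  -- basic facts about √33
  have hX2 : Real.sqrt 33 ^ 2 = 33 := Real.sq_sqrt (by norm_num)
  have hX5 : (5:ℝ) < Real.sqrt 33 := by
    nlinarith [Real.sqrt_nonneg 33]
  have hX6 : Real.sqrt 33 < 6 := by
    nlinarith [Real.sqrt_nonneg 33]
  have hXirr : Irrational (Real.sqrt 33) := by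
    rw [show ((33:ℝ) = ((33:ℕ):ℝ)) by norm_num, irrational_sqrt_natCast_iff]
    rintro ⟨r, hr⟩
    rcases Nat.lt_or_ge r 6 with h | h
    · interval_cases r <;> omega
    · nlinarith
  set X := Real.sqrt 33 with hXdef
  -- |z| = 1
  have hz1 : ‖z‖ = 1 := by
    have h1 : ‖z‖ ^ k = 1 := by
      rw [← norm_pow, hzk, norm_one]
    rcases lt_trichotomy (‖z‖) 1 with h | h | h
    · exact absurd h1 (ne_of_lt (pow_lt_one₀ (norm_nonneg z) h (by omega)))
    · exact h
    · exact absurd h1 (ne_of_gt (one_lt_pow₀ h (by omega)))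
  have hzne : z ≠ 0 := by
    intro h; rw [h] at hz; norm_num at hz
  set c := (starRingEnd ℂ) z with hcdef
  have hmul : z * c = 1 := by
    rw [hcdef, Complex.mul_conj, ← Complex.sq_norm, hz1]
    norm_num
  -- s = 2 Re z
  set s : ℝ := 2 * z.re with hsdef
  have hs_c : (s : ℂ) = z + c := by
    rw [hcdef, Complex.add_conj, hsdef]
  -- s² - 3s - 6 = 0
  have hsC : (s:ℂ) ^ 2 - 3 * (s:ℂ) - 6 = 0 := by
    have h0 : ((z + c)^2 - 3*(z + c) - 6) * z^2 = 0 := by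
      linear_combination hz + (2*z^2 + c*z + 1 - 3*z) * hmul
    rw [hs_c]
    rcases mul_eq_zero.mp h0 with h | h
    · exact h
    · exact absurd h (pow_ne_zero 2 hzne)
  have hs : s ^ 2 - 3 * s - 6 = 0 := by
    have := hsC
    rw [show ((s:ℂ)^2 - 3*(s:ℂ) - 6 : ℂ) = ((s^2 - 3*s - 6 : ℝ) : ℂ) by push_cast; ring,
      Complex.ofReal_eq_zero] at this
    exact this
  -- |s| ≤ 2
  have hsle : s ≤ 2 := by
    have := Complex.abs_re_le_norm z
    rw [hz1] at this
    have := abs_le.mp this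
    rw [hsdef]; linarith [this.2]
  -- s = (3 - X)/2
  have hsval : s = (3 - X) / 2 := by
    have hfac : (s - (3 - X)/2) * (s - (3 + X)/2) = 0 := by
      linear_combination hs - hX2/4
    rcases mul_eq_zero.mp hfac with h | h
    · linarith
    · exfalso; linarith
  set w : ℝ := (3 - X) / 2 with hwdef
  set u : ℝ := (3 + X) / 2 with hudef
  have hw2 : w ^ 2 = 3 * w + 6 := by rw [hwdef]; linear_combination hX2/4
  have hu2 : u ^ 2 = 3 * u + 6 := by rw [hudef]; linear_combination hX2/4
  have hu4 : (4:ℝ) < u := by rw [hudef]; linarith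
  -- z² = w z - 1
  have hz2 : z ^ 2 = (w:ℂ) * z - 1 := by
    rw [← hsval]
    linear_combination (-z) * hs_c - hmul
  -- the conjugate real root z'
  have hd2 : Real.sqrt (u^2 - 4) ^ 2 = u^2 - 4 :=
    Real.sq_sqrt (by nlinarith)
  set d : ℝ := Real.sqrt (u^2 - 4) with hddef
  have hdnn : 0 ≤ d := Real.sqrt_nonneg _
  set z' : ℝ := (u + d) / 2 with hz'def
  have hz'2 : z' ^ 2 = u * z' - 1 := by
    rw [hz'def]; linear_combination hd2/4
  have hz'gt : 1 < z' := by rw [hz'def]; linarith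
  -- induction: z^m and z'^m have matched conjugate expansions
  have key : ∀ m : ℕ, ∃ a₁ a₂ b₁ b₂ : ℚ,
      z ^ m = ((a₁:ℂ) + (a₂:ℂ) * (w:ℂ)) * z + ((b₁:ℂ) + (b₂:ℂ) * (w:ℂ)) ∧
      z' ^ m = ((a₁:ℝ) + (a₂:ℝ) * u) * z' + ((b₁:ℝ) + (b₂:ℝ) * u) := by
    intro m
    induction m with
    | zero => exact ⟨0, 0, 1, 0, by norm_num, by norm_num⟩
    | succ n ih =>
      obtain ⟨a₁, a₂, b₁, b₂, hC, hR⟩ := ih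
      refine ⟨6*a₂ + b₁, a₁ + 3*a₂ + b₂, -a₁, -a₂, ?_, ?_⟩
      · have hw2C : (w:ℂ) ^ 2 = 3 * (w:ℂ) + 6 := by
          exact_mod_cast hw2
        push_cast
        linear_combination z * hC + ((a₁:ℂ) + (a₂:ℂ)*(w:ℂ)) * hz2 + ((a₂:ℂ)*z) * hw2C
      · push_cast
        linear_combination z' * hR + ((a₁:ℝ) + (a₂:ℝ)*u) * hz'2 + ((a₂:ℝ)*z') * hu2
  obtain ⟨a₁, a₂, b₁, b₂, hC, hR⟩ := key k
  rw [hzk] at hC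
  -- z is not real
  have him : z.im ≠ 0 := by
    intro h
    have hzr : z = (z.re : ℂ) := Complex.ext rfl (by simpa using h)
    have habs : |z.re| = 1 := by
      rw [hzr, Complex.norm_real, Real.norm_eq_abs] at hz1; exact hz1
    rcases abs_eq (by norm_num : (0:ℝ) ≤ 1) |>.mp habs with h1 | h1 <;>
      rw [hzr, h1] at hz <;> norm_num at hz
  replace hC := hC.symm
  -- imaginary part gives a₁ + a₂ w = 0
  have hA : (a₁:ℝ) + (a₂:ℝ) * w = 0 := by
    have hre : (((a₁:ℂ) + (a₂:ℂ) * (w:ℂ)) * z + ((b₁:ℂ) + (b₂:ℂ) * (w:ℂ))).im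
        = ((a₁:ℝ) + (a₂:ℝ) * w) * z.im := by
      simp [Complex.add_im, Complex.mul_im, Complex.ofReal_im, Complex.ofReal_re]
    rw [hC] at hre
    simp at hre
    exact hre.resolve_right him
  -- irrationality: rational combinations of w vanish only trivially
  have hrat : ∀ p q : ℚ, (p:ℝ) + (q:ℝ) * w = 0 → p = 0 ∧ q = 0 := by
    intro p q hpq
    rcases eq_or_ne q 0 with hq | hq
    · rw [hq] at hpq
      simp at hpq
      exact ⟨by exact_mod_cast hpq, hq⟩
    · exfalso
      have hqne : (q:ℝ) ≠ 0 := by exact_mod_cast hq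
      have hXeq : X = (((2*p + 3*q)/q : ℚ) : ℝ) := by
        rw [hwdef] at hpq
        push_cast
        field_simp
        field_simp at hpq
        linarith
      exact hXirr ⟨_, hXeq.symm⟩
  obtain ⟨ha₁, ha₂⟩ := hrat a₁ a₂ hA
  -- real part gives b₁ + b₂ w = 1
  have hB : (b₁:ℝ) + (b₂:ℝ) * w = 1 := by
    rw [ha₁, ha₂] at hC
    push_cast at hC
    simp at hC
    have hre := congrArg Complex.re hC
    simpa using hre
  obtain ⟨hb₁', hb₂⟩ := hrat (b₁ - 1) b₂ (by push_cast; linarith)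
  have hb₁ : b₁ = 1 := by linarith
  -- conclude: z'^k = 1, contradiction with z' > 1
  rw [ha₁, ha₂, hb₁, hb₂] at hR
  push_cast at hR
  norm_num at hR
  have hgt : (1:ℝ) < z' ^ k := one_lt_pow₀ hz'gt (by omega)
  rw [hR] at hgt
  exact lt_irrefl 1 hgt
end
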